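/- Let A be a finite algebra with a minimal nontrivial congruence μ (an atom with ⊥ ≺ μ), and let U be a (⊥, μ)-minimal set. Then the group Π(A, U) of polynomial permutations of U acts transitively on the set of (⊥, μ)-traces contained in U, moreover this action is by polynomial isomorphisms; the action of Π(A, U) on the body of U has at most two orbits; and if some element of Π(A, U) moves some element of some trace nontrivially within that trace, then Π(A, U) acts transitively on the body of U. -/

import Mathlib

/-- A purely functional first-order signature. -/
structure Signature where
  ops : Type
  arity : ops → ℕ

/-- An algebra for a signature: an interpretation of each operation symbol. -/
structure UAlg (σ : Signature) (A : Type) where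
  interp : ∀ o : σ.ops, (Fin (σ.arity o) → A) → A

/-- Terms in `n` variables over a signature. -/
inductive Term (σ : Signature) (n : ℕ) : Type
  | var : Fin n → Term σ n
  | op : (o : σ.ops) → (Fin (σ.arity o) → Term σ n) → Term σ n

/-- Evaluation of a term at a tuple. -/
def Term.eval {σ : Signature} {A : Type} (Alg : UAlg σ A) {n : ℕ} :
    Term σ n → (Fin n → A) → A
  | .var i, v => v i
  | .op o ts, v => Alg.interp o fun j => (ts j).eval Alg v

/-- A congruence: an equivalence relation compatible with all operations. -/
def IsCongruence {σ : Signature} {A : Type} (Alg : UAlg σ A) (r : A → A → Prop) : Prop :=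
  Equivalence r ∧ ∀ (o : σ.ops) (x y : Fin (σ.arity o) → A),
    (∀ i, r (x i) (y i)) → r (Alg.interp o x) (Alg.interp o y)

/-- A `k`-ary polynomial operation: a term operation with parameters. -/
def IsPolynomial {σ : Signature} {A : Type} (Alg : UAlg σ A) {k : ℕ}
    (f : (Fin k → A) → A) : Prop :=
  ∃ (n : ℕ) (t : Term σ (k + n)) (params : Fin n → A),
    ∀ x : Fin k → A, f x = t.eval Alg (Fin.append x params)

/-- A unary polynomial operation. -/
def IsUnaryPolynomial {σ : Signature} {A : Type} (Alg : UAlg σ A) (f : A → A) : Prop :=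
  IsPolynomial Alg (k := 1) fun x => f (x 0)

/-- The term condition TermCond(α, β; γ). -/
def TermCond {σ : Signature} {A : Type} (Alg : UAlg σ A) (α β γ : A → A → Prop) : Prop :=
  ∀ (n m : ℕ) (t : Term σ (n + m)) (a₁ a₂ : Fin n → A) (b₁ b₂ : Fin m → A),
    (∀ i, α (a₁ i) (a₂ i)) → (∀ i, β (b₁ i) (b₂ i)) →
    γ (t.eval Alg (Fin.append a₁ b₁)) (t.eval Alg (Fin.append a₁ b₂)) →
    γ (t.eval Alg (Fin.append a₂ b₁)) (t.eval Alg (Fin.append a₂ b₂))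

/-- β is strongly abelian over γ. -/
def StronglyAbelianOver {σ : Signature} {A : Type} (Alg : UAlg σ A)
    (β γ : A → A → Prop) : Prop :=
  ∀ (n m : ℕ) (t : Term σ (n + m)) (a₁ a₂ : Fin n → A) (b₁ b₂ b₃ : Fin m → A),
    (∀ i, β (a₁ i) (a₂ i)) → (∀ i, β (b₁ i) (b₂ i)) → (∀ i, β (b₂ i) (b₃ i)) →
    γ (t.eval Alg (Fin.append a₁ b₁)) (t.eval Alg (Fin.append a₂ b₂)) →
    γ (t.eval Alg (Fin.append a₁ b₃)) (t.eval Alg (Fin.append a₂ b₃))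

/-- The least congruence containing a binary relation. -/
def congClosure {σ : Signature} {A : Type} (Alg : UAlg σ A) (R : A → A → Prop) :
    A → A → Prop :=
  fun a b => ∀ r, IsCongruence Alg r → (∀ x y, R x y → r x y) → r a b

/-- A subset closed under the operations. -/
def IsSubalgebra {σ : Signature} {A : Type} (Alg : UAlg σ A) (s : Set A) : Prop :=
  ∀ (o : σ.ops) (x : Fin (σ.arity o) → A), (∀ j, x j ∈ s) → Alg.interp o x ∈ s

/-- The power algebra `A^I`. -/
def UAlg.pow {σ : Signature} {A : Type} (Alg : UAlg σ A) (I : Type) :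
    UAlg σ (I → A) :=
  ⟨fun o x i => Alg.interp o fun j => x j i⟩

/-- The product of a family of algebras. -/
def UAlg.pi {σ : Signature} {ι : Type} {A : ι → Type} (Alg : ∀ i, UAlg σ (A i)) :
    UAlg σ (∀ i, A i) :=
  ⟨fun o x i => (Alg i).interp o fun j => x j i⟩

/-- The binary product of two algebras. -/
def UAlg.prod2 {σ : Signature} {A B : Type} (AlgA : UAlg σ A) (AlgB : UAlg σ B) :
    UAlg σ (A × B) :=
  ⟨fun o x => (AlgA.interp o fun j => (x j).1, AlgB.interp o fun j => (x j).2)⟩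

/-- The algebra structure on a subalgebra. -/
def UAlg.sub {σ : Signature} {A : Type} (Alg : UAlg σ A) (s : Set A)
    (hs : IsSubalgebra Alg s) : UAlg σ s :=
  ⟨fun o x => ⟨Alg.interp o fun j => (x j : A), hs o _ fun j => (x j).2⟩⟩

/-- Homomorphisms of algebras. -/
def IsHom {σ : Signature} {A B : Type} (AlgA : UAlg σ A) (AlgB : UAlg σ B)
    (f : A → B) : Prop :=
  ∀ (o : σ.ops) (x : Fin (σ.arity o) → A), f (AlgA.interp o x) = AlgB.interp o (f ∘ x)

/-- An idempotent unary polynomial. -/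
def IsIdempotentPoly {σ : Signature} {A : Type} (Alg : UAlg σ A) (e : A → A) : Prop :=
  IsUnaryPolynomial Alg e ∧ ∀ x, e (e x) = e x

/-- A (⊥, δ)-minimal set. -/
def IsMinimalSet {σ : Signature} {A : Type} (Alg : UAlg σ A) (δ : A → A → Prop)
    (U : Set A) : Prop :=
  (∃ e, IsIdempotentPoly Alg e ∧ U = Set.range e ∧ ∃ a b, δ a b ∧ e a ≠ e b) ∧
  ∀ e', IsIdempotentPoly Alg e' → Set.range e' ⊆ U → (∃ a b, δ a b ∧ e' a ≠ e' b) →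
    Set.range e' = U

/-- μ is an atom of the congruence lattice. -/
def IsAtomCong {σ : Signature} {A : Type} (Alg : UAlg σ A) (μ : A → A → Prop) : Prop :=
  IsCongruence Alg μ ∧ μ ≠ (fun a b => a = b) ∧
  ∀ θ, IsCongruence Alg θ → (∀ a b, θ a b → μ a b) → θ = (fun a b => a = b) ∨ θ = μ

/-- A (⊥, μ)-trace in a minimal set U. -/
def IsTrace {A : Type} (μ : A → A → Prop) (U N : Set A) : Prop :=
  (∃ a ∈ U, N = {x ∈ U | μ x a}) ∧ ∃ x ∈ N, ∃ y ∈ N, x ≠ y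

/-- The body of a minimal set: the union of its traces. -/
def Body {A : Type} (μ : A → A → Prop) (U : Set A) : Set A :=
  {x | ∃ N, IsTrace μ U N ∧ x ∈ N}

/-- Polynomial permutations of U (as functions A → A which are bijective on U). -/
def PolPermFun {σ : Signature} {A : Type} (Alg : UAlg σ A) (U : Set A) : Set (A → A) :=
  { p | IsUnaryPolynomial Alg p ∧ Set.BijOn p U U }

/-- Subdirect irreducibility: there is a pair contained in every nontrivial congruence. -/
def IsSI {σ : Signature} {B : Type} (Alg : UAlg σ B) : Prop :=
  ∃ a b : B, a ≠ b ∧ ∀ θ, IsCongruence Alg θ → θ ≠ (fun x y => x = y) → θ a b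

/-- The subalgebra generated by a set. -/
def genSub {σ : Signature} {B : Type} (Alg : UAlg σ B) (s : Set B) : Set B :=
  ⋂₀ {t | IsSubalgebra Alg t ∧ s ⊆ t}

/-- A strongly solvable congruence: connected to ⊥ by strongly abelian covers. -/
def IsStronglySolvable {σ : Signature} {A : Type} (Alg : UAlg σ A)
    (s : A → A → Prop) : Prop :=
  ∃ (n : ℕ) (c : Fin (n + 1) → (A → A → Prop)),
    c 0 = (fun a b => a = b) ∧ c (Fin.last n) = s ∧
    (∀ i, IsCongruence Alg (c i)) ∧
    ∀ i : Fin n, (∀ a b, c i.castSucc a b → c i.succ a b) ∧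
      StronglyAbelianOver Alg (c i.succ) (c i.castSucc)

/-- The set of n-ary term operations of an algebra. -/
def TermFun {σ : Signature} {A : Type} (Alg : UAlg σ A) (n : ℕ) :
    Set ((Fin n → A) → A) :=
  { g | ∃ t : Term σ n, g = fun v => t.eval Alg v }

section Aux

variable {σ : Signature} {A : Type}

def Term.rename {n k : ℕ} (ρ : Fin n → Fin k) : Term σ n → Term σ k
  | .var i => .var (ρ i)
  | .op o ts => .op o fun j => (ts j).rename ρ

theorem eval_rename (Alg : UAlg σ A) {n k : ℕ} (ρ : Fin n → Fin k) (t : Term σ n)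
    (v : Fin k → A) : (t.rename ρ).eval Alg v = t.eval Alg (v ∘ ρ) := by
  induction t with
  | var i => rfl
  | op o ts ih => simp only [Term.rename, Term.eval]; congr 1; funext j; exact ih j

def Term.subst {n k : ℕ} (g : Fin n → Term σ k) : Term σ n → Term σ k
  | .var i => g i
  | .op o ts => .op o fun j => (ts j).subst g

theorem eval_subst (Alg : UAlg σ A) {n k : ℕ} (g : Fin n → Term σ k) (t : Term σ n)
    (v : Fin k → A) : (t.subst g).eval Alg v = t.eval Alg (fun i => (g i).eval Alg v) := by
  induction t with
  | var i => rfl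
  | op o ts ih => simp only [Term.subst, Term.eval]; congr 1; funext j; exact ih j

theorem unary_spec {Alg : UAlg σ A} {f : A → A} (hf : IsUnaryPolynomial Alg f) :
    ∃ (n : ℕ) (t : Term σ (1 + n)) (params : Fin n → A),
      ∀ a : A, f a = t.eval Alg (Fin.append (fun _ => a) params) := by
  obtain ⟨n, t, params, h⟩ := hf
  exact ⟨n, t, params, fun a => h (fun _ => a)⟩

theorem unary_of_spec {Alg : UAlg σ A} {f : A → A}
    (h : ∃ (n : ℕ) (t : Term σ (1 + n)) (params : Fin n → A),
      ∀ a : A, f a = t.eval Alg (Fin.append (fun _ => a) params)) :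
    IsUnaryPolynomial Alg f := by
  obtain ⟨n, t, params, h⟩ := h
  refine ⟨n, t, params, fun x => ?_⟩
  have := h (x 0)
  convert this using 3
  funext i
  refine Fin.cases ?_ (fun i => i.elim0) i
  rfl

theorem poly_id (Alg : UAlg σ A) : IsUnaryPolynomial Alg (fun a => a) := by
  refine unary_of_spec ⟨0, .var (Fin.castAdd 0 0), Fin.elim0, fun a => ?_⟩
  simp [Term.eval, Fin.append_left]

theorem poly_comp {Alg : UAlg σ A} {f g : A → A} (hf : IsUnaryPolynomial Alg f)
    (hg : IsUnaryPolynomial Alg g) : IsUnaryPolynomial Alg (fun a => g (f a)) := by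
  obtain ⟨n, t, p, ht⟩ := unary_spec hf
  obtain ⟨m, s, q, hs⟩ := unary_spec hg
  set ρ : Fin (1 + n) → Fin (1 + (n + m)) :=
    Fin.addCases (fun z => Fin.castAdd (n + m) z) (fun j => Fin.natAdd 1 (Fin.castAdd m j)) with hρ
  set G : Fin (1 + m) → Term σ (1 + (n + m)) :=
    Fin.addCases (fun _ => t.rename ρ) (fun i => .var (Fin.natAdd 1 (Fin.natAdd n i))) with hG
  refine unary_of_spec ⟨n + m, s.subst G, Fin.append p q, fun a => ?_⟩
  set V : Fin (1 + (n + m)) → A := Fin.append (fun _ => a) (Fin.append p q) with hV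
  rw [eval_subst]
  have key : (fun i => (G i).eval Alg V) = Fin.append (fun _ : Fin 1 => f a) q := by
    funext i
    refine Fin.addCases (fun z => ?_) (fun i' => ?_) i
    · rw [hG]
      simp only [Fin.addCases_left, Fin.append_left]
      rw [eval_rename, ht a]
      congr 1
      funext j
      refine Fin.addCases (fun z' => ?_) (fun j' => ?_) j
      · rw [hρ]; simp only [Fin.addCases_left, Function.comp_apply]
        rw [hV]; simp [Fin.append_left]
      · rw [hρ]; simp only [Fin.addCases_right, Function.comp_apply]
        rw [hV]; simp [Fin.append_left, Fin.append_right]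
    · rw [hG]
      simp only [Fin.addCases_right, Fin.append_right]
      show V _ = q i'
      rw [hV]; simp [Fin.append_right]
  rw [key, ← hs (f a)]

end Aux
section Aux2

variable {σ : Signature} {A : Type}

theorem poly_iterate {Alg : UAlg σ A} {f : A → A} (hf : IsUnaryPolynomial Alg f) (m : ℕ) :
    IsUnaryPolynomial Alg f^[m] := by
  induction m with
  | zero => exact poly_id Alg
  | succ k ih =>
      rw [Function.iterate_succ']
      exact poly_comp (f := f^[k]) (g := f) ih hf

theorem poly_op_update (Alg : UAlg σ A) (o : σ.ops) (x : Fin (σ.arity o) → A)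
    (i : Fin (σ.arity o)) :
    IsUnaryPolynomial Alg (fun c => Alg.interp o (Function.update x i c)) := by
  refine unary_of_spec ⟨σ.arity o,
    .op o (fun j => if j = i then .var (Fin.castAdd (σ.arity o) 0) else .var (Fin.natAdd 1 j)),
    x, fun c => ?_⟩
  show Alg.interp o _ = Alg.interp o _
  congr 1
  funext j
  by_cases h : j = i
  · subst h; simp [Term.eval, Fin.append_left, Function.update_self]
  · simp [Term.eval, h, Fin.append_right, Function.update_of_ne h]

theorem congr_eval {Alg : UAlg σ A} {r : A → A → Prop} (hr : IsCongruence Alg r)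
    {n : ℕ} (t : Term σ n) {v w : Fin n → A} (h : ∀ i, r (v i) (w i)) :
    r (t.eval Alg v) (t.eval Alg w) := by
  induction t with
  | var i => exact h i
  | op o ts ih => exact hr.2 o _ _ fun j => ih j

theorem congr_unary {Alg : UAlg σ A} {r : A → A → Prop} (hr : IsCongruence Alg r)
    {f : A → A} (hf : IsUnaryPolynomial Alg f) {a b : A} (hab : r a b) : r (f a) (f b) := by
  obtain ⟨n, t, p, ht⟩ := unary_spec hf
  rw [ht a, ht b]
  refine congr_eval hr t fun i => ?_
  refine Fin.addCases (fun z => ?_) (fun j => ?_) i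
  · simpa [Fin.append_left] using hab
  · simp only [Fin.append_right]; exact hr.1.refl _

theorem congClosure_isCong (Alg : UAlg σ A) (R : A → A → Prop) :
    IsCongruence Alg (congClosure Alg R) := by
  refine ⟨⟨fun a r hr _ => hr.1.refl a,
    fun h r hr hc => hr.1.symm (h r hr hc),
    fun h h' r hr hc => hr.1.trans (h r hr hc) (h' r hr hc)⟩,
    fun o x y h r hr hc => hr.2 o x y fun i => h i r hr hc⟩

/-- A Mal'cev link. -/
def MLink (Alg : UAlg σ A) (a b u v : A) : Prop :=
  ∃ p, IsUnaryPolynomial Alg p ∧ ((u = p a ∧ v = p b) ∨ (u = p b ∧ v = p a))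

theorem mlink_symm {Alg : UAlg σ A} {a b : A} : Symmetric (MLink Alg a b) := by
  rintro u v ⟨p, hp, h | h⟩
  · exact ⟨p, hp, Or.inr ⟨h.2, h.1⟩⟩
  · exact ⟨p, hp, Or.inl ⟨h.2, h.1⟩⟩

theorem mchain_lift {Alg : UAlg σ A} {a b : A} {P : A → A} (hP : IsUnaryPolynomial Alg P)
    {u v : A} (h : Relation.ReflTransGen (MLink Alg a b) u v) :
    Relation.ReflTransGen (MLink Alg a b) (P u) (P v) := by
  refine Relation.ReflTransGen.lift P (fun x y hxy => ?_) _ _ h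
  obtain ⟨p, hp, hor⟩ := hxy
  refine ⟨fun z => P (p z), poly_comp hp hP, ?_⟩
  rcases hor with ⟨h1, h2⟩ | ⟨h1, h2⟩
  · exact Or.inl ⟨by rw [h1], by rw [h2]⟩
  · exact Or.inr ⟨by rw [h1], by rw [h2]⟩

theorem mchain_cong (Alg : UAlg σ A) (a b : A) :
    IsCongruence Alg (Relation.ReflTransGen (MLink Alg a b)) := by
  constructor
  · exact ⟨fun _ => Relation.ReflTransGen.refl,
      fun h => haveI : Std.Symm (MLink Alg a b) := ⟨fun _ _ hh => mlink_symm hh⟩; Std.Symm.symm _ _ h,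
      fun h h' => h.trans h'⟩
  · intro o x y h
    have step : ∀ m : ℕ, Relation.ReflTransGen (MLink Alg a b)
        (Alg.interp o x) (Alg.interp o (fun j => if (j : ℕ) < m then y j else x j)) := by
      intro m
      induction m with
      | zero =>
          have : (fun j : Fin (σ.arity o) => if (j : ℕ) < 0 then y j else x j) = x := by
            funext j; simp
          rw [this]
      | succ m ih =>
          by_cases hm : m < σ.arity o
          · set i : Fin (σ.arity o) := ⟨m, hm⟩ with hi
            have e1 : (fun j : Fin (σ.arity o) => if (j : ℕ) < m then y j else x j) =
                Function.update (fun j : Fin (σ.arity o) => if (j : ℕ) < m then y j else x j) i (x i) := by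
              funext j
              rcases eq_or_ne j i with rfl | hj
              · simp [Function.update_self, hi]
              · rw [Function.update_of_ne hj]
            have e2 : (fun j : Fin (σ.arity o) => if (j : ℕ) < m + 1 then y j else x j) =
                Function.update (fun j : Fin (σ.arity o) => if (j : ℕ) < m then y j else x j) i (y i) := by
              funext j
              rcases eq_or_ne j i with rfl | hj
              · simp [Function.update_self, hi]
              · rw [Function.update_of_ne hj]
                have hj' : (j : ℕ) ≠ m := by
                  intro hc; exact hj (Fin.ext (by simpa [hi] using hc))
                have : (j : ℕ) < m + 1 ↔ (j : ℕ) < m := by omega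
                simp [this]
            refine ih.trans ?_
            rw [e2]
            nth_rewrite 1 [e1]
            exact mchain_lift (poly_op_update Alg o _ i) (h i)
          · have : (fun j : Fin (σ.arity o) => if (j : ℕ) < m + 1 then y j else x j) =
                (fun j : Fin (σ.arity o) => if (j : ℕ) < m then y j else x j) := by
              funext j
              have hj := j.isLt
              have : (j : ℕ) < m + 1 ↔ (j : ℕ) < m := by omega
              simp [this]
            rw [this]; exact ih
    have := step (σ.arity o)
    have hy : (fun j : Fin (σ.arity o) => if (j : ℕ) < σ.arity o then y j else x j) = y := by
      funext j; simp [j.isLt]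
    rwa [hy] at this

theorem malcev {Alg : UAlg σ A} {a b c d : A}
    (h : congClosure Alg (fun u v => u = a ∧ v = b) c d) :
    Relation.ReflTransGen (MLink Alg a b) c d := by
  refine h _ (mchain_cong Alg a b) ?_
  rintro x y ⟨rfl, rfl⟩
  exact Relation.ReflTransGen.single ⟨fun z => z, poly_id Alg, Or.inl ⟨rfl, rfl⟩⟩

theorem cg_pair_eq_mu {Alg : UAlg σ A} {μ : A → A → Prop} (hatom : IsAtomCong Alg μ)
    {a b : A} (hab : μ a b) (hne : a ≠ b) {c d : A} (hcd : μ c d) :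
    congClosure Alg (fun u v => u = a ∧ v = b) c d := by
  set θ := congClosure Alg (fun u v => u = a ∧ v = b) with hθ
  have hcong : IsCongruence Alg θ := congClosure_isCong Alg _
  have hsub : ∀ x y, θ x y → μ x y := by
    intro x y hxy
    exact hxy μ hatom.1 (by rintro u v ⟨rfl, rfl⟩; exact hab)
  have hab' : θ a b := fun r _ hc => hc a b ⟨rfl, rfl⟩
  rcases hatom.2.2 θ hcong hsub with h0 | h1
  · exact absurd (by rw [h0] at hab'; exact hab') hne
  · rw [h1]; exact hcd

theorem mchain_sub_mu {Alg : UAlg σ A} {μ : A → A → Prop} (hμ : IsCongruence Alg μ)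
    {a b : A} (hab : μ a b) {c d : A}
    (h : Relation.ReflTransGen (MLink Alg a b) c d) : μ c d := by
  induction h with
  | refl => exact hμ.1.refl c
  | tail h' step ih =>
      refine hμ.1.trans ih ?_
      obtain ⟨p, hp, hor⟩ := step
      rcases hor with ⟨h1, h2⟩ | ⟨h1, h2⟩
      · rw [h1, h2]; exact congr_unary hμ hp hab
      · rw [h1, h2]; exact hμ.1.symm (congr_unary hμ hp hab)

theorem extract_last {Alg : UAlg σ A} {a b : A} (φ : A → A) {c d : A}
    (h : Relation.ReflTransGen (MLink Alg a b) c d) (hne : φ c ≠ φ d) :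
    ∃ u v, Relation.ReflTransGen (MLink Alg a b) c u ∧ MLink Alg a b u v ∧
      φ u ≠ φ v ∧ φ v = φ d := by
  induction h with
  | refl => exact absurd rfl hne
  | @tail w d h' step ih =>
      by_cases hw : φ w = φ d
      · have hcw : φ c ≠ φ w := fun hc => hne (hc.trans hw)
        obtain ⟨u, v, h1, h2, h3, h4⟩ := ih hcw
        exact ⟨u, v, h1, h2, h3, h4.trans hw⟩
      · exact ⟨w, d, h', step, hw, rfl⟩

end Aux2
section Aux3
set_option linter.unusedSectionVars false

variable {σ : Signature} {A : Type} [Fintype A] {Alg : UAlg σ A} {μ : A → A → Prop}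
  {U : Set A}

theorem exists_idem_pow (w : A → A) : ∃ m, 1 ≤ m ∧ ∀ z, w^[m] (w^[m] z) = w^[m] z := by
  obtain ⟨i, j, hne, heq⟩ := Finite.exists_ne_map_eq_of_infinite (fun k : ℕ => w^[k])
  wlog hij : i < j generalizing i j
  · exact this j i hne.symm heq.symm (by omega)
  set p := j - i with hp
  have hp1 : 1 ≤ p := by omega
  have hstep : ∀ n, i ≤ n → w^[n + p] = w^[n] := by
    intro n hn
    funext z
    have h1 : w^[n + p] z = w^[n - i] (w^[i + p] z) := by
      rw [← Function.iterate_add_apply]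
      congr 1; omega
    have h2 : w^[i + p] = w^[i] := by rw [show i + p = j by omega, ← heq]
    rw [h1, h2, ← Function.iterate_add_apply]
    congr 1; omega
  have hmul : ∀ k n, i ≤ n → w^[n + k * p] = w^[n] := by
    intro k
    induction k with
    | zero => intro n hn; simp
    | succ k ih =>
        intro n hn
        have : n + (k + 1) * p = (n + k * p) + p := by ring
        rw [this, hstep _ (by omega), ih n hn]
  refine ⟨(i + 1) * p, by nlinarith, fun z => ?_⟩
  have : w^[(i + 1) * p + (i + 1) * p] = w^[(i + 1) * p] := by
    refine hmul (i + 1) ((i + 1) * p) (by nlinarith)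
  calc w^[(i + 1) * p] (w^[(i + 1) * p] z) = w^[(i + 1) * p + (i + 1) * p] z := by
        rw [Function.iterate_add_apply]
      _ = w^[(i + 1) * p] z := by rw [this]

theorem efix {e : A → A} (he : IsIdempotentPoly Alg e) (hrange : U = Set.range e) :
    ∀ u ∈ U, e u = u := by
  intro u hu
  rw [hrange] at hu
  obtain ⟨z, rfl⟩ := hu
  exact he.2 z

/-- Key Lemma: a polynomial mapping U into U which does not collapse some μ-pair of U
is a permutation of U. -/
theorem perm_of_noncollapse (hatom : IsAtomCong Alg μ)
    {e : A → A} (he : IsIdempotentPoly Alg e) (hrange : U = Set.range e)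
    (hmin : ∀ e', IsIdempotentPoly Alg e' → Set.range e' ⊆ U →
      (∃ a b, μ a b ∧ e' a ≠ e' b) → Set.range e' = U)
    {f : A → A} (hf : IsUnaryPolynomial Alg f) (hfU : Set.MapsTo f U U)
    {x y : A} (hx : x ∈ U) (hy : y ∈ U) (hμxy : μ x y) (hne : f x ≠ f y) :
    Set.BijOn f U U := by
  have hμc : IsCongruence Alg μ := hatom.1
  have hex := efix he hrange
  set P : (A → A) → Prop :=
    fun t => IsUnaryPolynomial Alg t ∧ (∀ z, t z ∈ f '' U) ∧ t x ≠ t y with hP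
  have hxyne : x ≠ y := fun h => hne (by rw [h])
  have hP0 : P (fun z => f (e z)) := by
    refine ⟨poly_comp he.1 hf, fun z => ⟨e z, by rw [hrange]; exact ⟨z, rfl⟩, rfl⟩, ?_⟩
    show f (e x) ≠ f (e y)
    rw [hex x hx, hex y hy]; exact hne
  have key : ∀ t, P t → ∃ s, IsUnaryPolynomial Alg s ∧ (∀ z, s z ∈ f '' U) ∧
      P (fun z => s (t z)) := by
    intro t ⟨htp, htr, htne⟩
    have hμt : μ (t x) (t y) := congr_unary hμc htp hμxy
    have hchain : Relation.ReflTransGen (MLink Alg (t x) (t y)) x y :=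
      malcev (cg_pair_eq_mu hatom hμt htne hμxy)
    have hφ : (fun z => f (e z)) x ≠ (fun z => f (e z)) y := by
      show f (e x) ≠ f (e y)
      rw [hex x hx, hex y hy]; exact hne
    obtain ⟨u, v, _, ⟨q, hq, hor⟩, huv, _⟩ := extract_last (fun z => f (e z)) hchain hφ
    have hsp : IsUnaryPolynomial Alg (fun z => f (e (q z))) :=
      poly_comp (poly_comp hq he.1) hf
    have hsr : ∀ z, (fun z => f (e (q z))) z ∈ f '' U := by
      intro z; exact ⟨e (q z), by rw [hrange]; exact ⟨q z, rfl⟩, rfl⟩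
    refine ⟨fun z => f (e (q z)), hsp, hsr,
      poly_comp (f := t) (g := fun z => f (e (q z))) htp hsp, fun z => hsr (t z), ?_⟩
    show f (e (q (t x))) ≠ f (e (q (t y)))
    rcases hor with ⟨h1, h2⟩ | ⟨h1, h2⟩
    · rw [← h1, ← h2]; exact huv
    · rw [← h1, ← h2]; exact huv.symm
  -- build the sequence
  choose! F hF1 hF2 hF3 using key
  let g : {t // P t} → {t // P t} := fun t => ⟨fun z => F t.1 (t.1 z), hF3 t.1 t.2⟩
  let seq : ℕ → {t // P t} := fun k => g^[k] ⟨fun z => f (e z), hP0⟩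
  have hseq : ∀ k, (seq (k + 1)).1 = fun z => F (seq k).1 ((seq k).1 z) := by
    intro k
    show (g^[k + 1] _).1 = _
    rw [Function.iterate_succ_apply']
  have hconn : ∀ i d, ∃ w, IsUnaryPolynomial Alg w ∧ (∀ z, w z ∈ f '' U) ∧
      (seq (i + d + 1)).1 = fun z => w ((seq i).1 z) := by
    intro i d
    induction d with
    | zero =>
        exact ⟨F (seq i).1, hF1 _ (seq i).2, hF2 _ (seq i).2, hseq i⟩
    | succ d ih =>
        obtain ⟨w, hw1, hw2, hw3⟩ := ih
        refine ⟨fun z => F (seq (i + d + 1)).1 (w z),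
          poly_comp hw1 (hF1 _ (seq (i + d + 1)).2),
          fun z => hF2 _ (seq (i + d + 1)).2 _, ?_⟩
        have := hseq (i + d + 1)
        rw [show i + (d + 1) + 1 = (i + d + 1) + 1 by omega, this, hw3]
  obtain ⟨i, j, hne', heq'⟩ := Finite.exists_ne_map_eq_of_infinite (fun k : ℕ => (seq k).1)
  wlog hij : i < j generalizing i j
  · exact this j i hne'.symm heq'.symm (by omega)
  obtain ⟨w, hw1, hw2, hw3⟩ := hconn i (j - i - 1)
  have hwfix : ∀ z, w ((seq i).1 z) = (seq i).1 z := by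
    intro z
    have : (seq (i + (j - i - 1) + 1)).1 z = (seq i).1 z := by
      rw [show i + (j - i - 1) + 1 = j by omega]
      exact (congrFun heq' z).symm
    rw [hw3] at this; exact this
  obtain ⟨m, hm1, hm2⟩ := exists_idem_pow w
  set h : A → A := w^[m] with hhm
  have hh_poly : IsUnaryPolynomial Alg h := poly_iterate hw1 m
  have hh_range : ∀ z, h z ∈ f '' U := by
    intro z
    rw [hhm, show m = (m - 1) + 1 by omega, Function.iterate_succ_apply']
    exact hw2 _
  have hh_fix : ∀ z, h ((seq i).1 z) = (seq i).1 z := by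
    intro z; exact Function.iterate_fixed (hwfix z) m
  have himg_sub : f '' U ⊆ U := hfU.image_subset
  have hrange_eq : Set.range h = U := by
    refine hmin h ⟨hh_poly, hm2⟩ ?_ ?_
    · rintro _ ⟨z, rfl⟩; exact himg_sub (hh_range z)
    · refine ⟨(seq i).1 x, (seq i).1 y, congr_unary hμc (seq i).2.1 hμxy, ?_⟩
      rw [hh_fix x, hh_fix y]; exact (seq i).2.2.2
  have hsurj : Set.SurjOn f U U := by
    intro u hu
    rw [← hrange_eq] at hu
    obtain ⟨z, rfl⟩ := hu
    exact hh_range z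
  exact ((Set.toFinite U).surjOn_iff_bijOn_of_mapsTo hfU).mp hsurj

theorem id_mem_polperm : (fun a : A => a) ∈ PolPermFun Alg U :=
  ⟨poly_id Alg, Set.bijOn_id U⟩

theorem comp_mem_polperm {p q : A → A} (hp : p ∈ PolPermFun Alg U)
    (hq : q ∈ PolPermFun Alg U) : (fun a => q (p a)) ∈ PolPermFun Alg U :=
  ⟨poly_comp hp.1 hq.1, hq.2.comp hp.2⟩

theorem bijOn_iterate {p : A → A} (hp : Set.BijOn p U U) (k : ℕ) :
    Set.BijOn p^[k] U U := by
  induction k with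
  | zero => simpa using Set.bijOn_id U
  | succ k ih => rw [Function.iterate_succ']; exact hp.comp ih

theorem exists_inverse {p : A → A} (hp : p ∈ PolPermFun Alg U) :
    ∃ q ∈ PolPermFun Alg U, ∀ u ∈ U, q (p u) = u ∧ p (q u) = u := by
  obtain ⟨i, j, hne, heq⟩ := Finite.exists_ne_map_eq_of_infinite
    (fun k : ℕ => U.restrict p^[k])
  wlog hij : i < j generalizing i j
  · exact this j i hne.symm heq.symm (by omega)
  have hk : ∀ u ∈ U, p^[j - i] u = u := by
    intro u hu
    have h1 : p^[i] (p^[j - i] u) = p^[i] u := by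
      rw [← Function.iterate_add_apply, show i + (j - i) = j by omega]
      exact (congrFun heq ⟨u, hu⟩).symm
    exact (bijOn_iterate hp.2 i).injOn ((bijOn_iterate hp.2 (j - i)).mapsTo hu) hu h1
  set k := j - i with hkdef
  have hk1 : 1 ≤ k := by omega
  refine ⟨p^[k - 1], ⟨poly_iterate hp.1 _, bijOn_iterate hp.2 _⟩, fun u hu => ⟨?_, ?_⟩⟩
  · have h1 : p^[k - 1] (p u) = p^[k - 1 + 1] u := (Function.iterate_succ_apply p (k - 1) u).symm
    rw [h1, show k - 1 + 1 = k by omega]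
    exact hk u hu
  · have h1 : p (p^[k - 1] u) = p^[k - 1 + 1] u := (Function.iterate_succ_apply' p (k - 1) u).symm
    rw [h1, show k - 1 + 1 = k by omega]
    exact hk u hu

end Aux3
section Aux4
set_option linter.unusedSectionVars false
set_option maxHeartbeats 1000000

variable {σ : Signature} {A : Type} [Fintype A] {Alg : UAlg σ A} {μ : A → A → Prop}
  {U : Set A} {e : A → A}

theorem trace_sub {N : Set A} (hT : IsTrace μ U N) : N ⊆ U := by
  obtain ⟨⟨a, haU, rfl⟩, -⟩ := hT
  intro z hz; exact hz.1

theorem trace_rel (hE : Equivalence μ) {N : Set A} (hT : IsTrace μ U N) :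
    ∀ z ∈ N, ∀ w ∈ N, μ z w := by
  obtain ⟨⟨a, haU, rfl⟩, -⟩ := hT
  intro z hz w hw
  exact hE.trans hz.2 (hE.symm hw.2)

theorem trace_mem (hE : Equivalence μ) {N : Set A} (hT : IsTrace μ U N) :
    ∀ z ∈ N, ∀ w ∈ U, μ w z → w ∈ N := by
  obtain ⟨⟨a, haU, rfl⟩, -⟩ := hT
  intro z hz w hw hμ
  exact ⟨hw, hE.trans hμ hz.2⟩

theorem trace_mapsto (hatom : IsAtomCong Alg μ)
    (he : IsIdempotentPoly Alg e) (hrange : U = Set.range e)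
    (hmin : ∀ e', IsIdempotentPoly Alg e' → Set.range e' ⊆ U →
      (∃ a b, μ a b ∧ e' a ≠ e' b) → Set.range e' = U)
    {N₁ N₂ : Set A} (hT₁ : IsTrace μ U N₁) (hT₂ : IsTrace μ U N₂) :
    ∃ p ∈ PolPermFun Alg U, Set.MapsTo p N₁ N₂ := by
  have hE : Equivalence μ := hatom.1.1
  obtain ⟨-, x₁, hx₁, y₁, hy₁, hxy₁⟩ := id hT₁
  obtain ⟨-, x₂, hx₂, y₂, hy₂, hxy₂⟩ := id hT₂
  have hx₁U := trace_sub hT₁ hx₁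
  have hy₁U := trace_sub hT₁ hy₁
  have hx₂U := trace_sub hT₂ hx₂
  have hy₂U := trace_sub hT₂ hy₂
  have hμ₁ : μ x₁ y₁ := trace_rel hE hT₁ _ hx₁ _ hy₁
  have hμ₂ : μ x₂ y₂ := trace_rel hE hT₂ _ hx₂ _ hy₂
  have hchain : Relation.ReflTransGen (MLink Alg x₁ y₁) x₂ y₂ :=
    malcev (cg_pair_eq_mu hatom hμ₁ hxy₁ hμ₂)
  have hφ : e x₂ ≠ e y₂ := by
    rw [efix he hrange _ hx₂U, efix he hrange _ hy₂U]; exact hxy₂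
  obtain ⟨u, v, hcu, ⟨q, hq, hor⟩, hne12, -⟩ := extract_last e hchain hφ
  have hμu : μ x₂ u := mchain_sub_mu hatom.1 hμ₁ hcu
  have hμuv : μ u v := by
    rcases hor with ⟨h1, h2⟩ | ⟨h1, h2⟩
    · rw [h1, h2]; exact congr_unary hatom.1 hq hμ₁
    · rw [h1, h2]; exact hE.symm (congr_unary hatom.1 hq hμ₁)
  set g : A → A := fun z => e (q z) with hg
  have hgpoly : IsUnaryPolynomial Alg g := poly_comp hq he.1
  have hgU : Set.MapsTo g U U := fun z _ => by rw [hrange]; exact ⟨q z, rfl⟩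
  have hgU' : ∀ z, g z ∈ U := fun z => by rw [hrange]; exact ⟨q z, rfl⟩
  have hgne : g x₁ ≠ g y₁ := by
    show e (q x₁) ≠ e (q y₁)
    rcases hor with ⟨h1, h2⟩ | ⟨h1, h2⟩
    · rw [← h1, ← h2]; exact hne12
    · rw [← h1, ← h2]; exact hne12.symm
  have hperm : Set.BijOn g U U :=
    perm_of_noncollapse hatom he hrange hmin hgpoly hgU hx₁U hy₁U hμ₁ hgne
  have heuN : e u ∈ N₂ := by
    have heuU : e u ∈ U := by rw [hrange]; exact ⟨u, rfl⟩
    refine trace_mem hE hT₂ _ hx₂ _ heuU ?_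
    have h := congr_unary hatom.1 he.1 hμu
    rw [efix he hrange _ hx₂U] at h
    exact hE.symm h
  have hevN : e v ∈ N₂ := by
    have hμv : μ x₂ v := hE.trans hμu hμuv
    have heU : e v ∈ U := by rw [hrange]; exact ⟨v, rfl⟩
    refine trace_mem hE hT₂ _ hx₂ _ heU ?_
    have := congr_unary hatom.1 he.1 hμv
    rw [efix he hrange _ hx₂U] at this
    exact hE.symm this
  have hgx₁N : g x₁ ∈ N₂ := by
    rcases hor with ⟨h1, -⟩ | ⟨-, h2⟩
    · show e (q x₁) ∈ N₂; rw [← h1]; exact heuN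
    · show e (q x₁) ∈ N₂; rw [← h2]; exact hevN
  refine ⟨g, ⟨hgpoly, hperm⟩, fun z hz => ?_⟩
  have hμz : μ z x₁ := trace_rel hE hT₁ _ hz _ hx₁
  have : μ (g z) (g x₁) := congr_unary hatom.1 hgpoly hμz
  exact trace_mem hE hT₂ _ hgx₁N _ (hgU' z) this

theorem trace_image (hatom : IsAtomCong Alg μ)
    (he : IsIdempotentPoly Alg e) (hrange : U = Set.range e)
    (hmin : ∀ e', IsIdempotentPoly Alg e' → Set.range e' ⊆ U →
      (∃ a b, μ a b ∧ e' a ≠ e' b) → Set.range e' = U)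
    {N₁ N₂ : Set A} (hT₁ : IsTrace μ U N₁) (hT₂ : IsTrace μ U N₂) :
    ∃ p ∈ PolPermFun Alg U, p '' N₁ = N₂ := by
  obtain ⟨p, hp, hmap⟩ := trace_mapsto hatom he hrange hmin hT₁ hT₂
  obtain ⟨q, hq, hmap'⟩ := trace_mapsto hatom he hrange hmin hT₂ hT₁
  refine ⟨p, hp, ?_⟩
  have h1 : (p '' N₁).ncard = N₁.ncard :=
    Set.ncard_image_of_injOn (hp.2.injOn.mono (trace_sub hT₁))
  have h2 : N₂.ncard ≤ N₁.ncard := by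
    have := Set.ncard_le_ncard hmap'.image_subset (Set.toFinite N₁)
    rwa [Set.ncard_image_of_injOn (hq.2.injOn.mono (trace_sub hT₂))] at this
  exact Set.eq_of_subset_of_ncard_le hmap.image_subset (by rw [h1]; exact h2)
    (Set.toFinite N₂)

theorem trans_body (hatom : IsAtomCong Alg μ)
    (he : IsIdempotentPoly Alg e) (hrange : U = Set.range e)
    (hmin : ∀ e', IsIdempotentPoly Alg e' → Set.range e' ⊆ U →
      (∃ a b, μ a b ∧ e' a ≠ e' b) → Set.range e' = U)
    (hmove : ∃ p ∈ PolPermFun Alg U, ∃ N : Set A, IsTrace μ U N ∧ Set.MapsTo p N N ∧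
        ∃ x ∈ N, p x ≠ x) :
    ∀ a ∈ Body μ U, ∀ b ∈ Body μ U, ∃ p ∈ PolPermFun Alg U, p a = b := by
  have hE : Equivalence μ := hatom.1.1
  obtain ⟨p, hp, N, hTN, hmaps, x, hxN, hpx⟩ := hmove
  have hxU : x ∈ U := trace_sub hTN hxN
  have hpxN : p x ∈ N := hmaps hxN
  have hμxpx : μ x (p x) := trace_rel hE hTN _ hxN _ hpxN
  have hxne : x ≠ p x := fun h => hpx h.symm
  -- claim C
  have hC : ∀ u t, u ∈ N → t ∈ N → u ≠ t → ∃ r ∈ PolPermFun Alg U, r x = t := by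
    intro u t huN htN hut
    have huU := trace_sub hTN huN
    have htU := trace_sub hTN htN
    have hμut : μ u t := trace_rel hE hTN _ huN _ htN
    have hchain : Relation.ReflTransGen (MLink Alg x (p x)) u t :=
      malcev (cg_pair_eq_mu hatom hμxpx hxne hμut)
    have hφ : e u ≠ e t := by
      rw [efix he hrange _ huU, efix he hrange _ htU]; exact hut
    obtain ⟨w₁, w₂, -, ⟨q, hq, hor⟩, hne12, hlast⟩ := extract_last e hchain hφ
    rw [efix he hrange _ htU] at hlast
    set s : A → A := fun z => e (q z) with hs
    have hspoly : IsUnaryPolynomial Alg s := poly_comp hq he.1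
    have hsU : Set.MapsTo s U U := fun z _ => by rw [hrange]; exact ⟨q z, rfl⟩
    have hpxU : p x ∈ U := trace_sub hTN hpxN
    rcases hor with ⟨h1, h2⟩ | ⟨h1, h2⟩
    · have hsne : s x ≠ s (p x) := by
        show e (q x) ≠ e (q (p x)); rw [← h1, ← h2]; exact hne12
      have hsperm : Set.BijOn s U U :=
        perm_of_noncollapse hatom he hrange hmin hspoly hsU hxU hpxU hμxpx hsne
      refine ⟨fun z => s (p z), comp_mem_polperm hp ⟨hspoly, hsperm⟩, ?_⟩
      show e (q (p x)) = t
      rw [← h2]; exact hlast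
    · have hsne : s x ≠ s (p x) := by
        show e (q x) ≠ e (q (p x)); rw [← h1, ← h2]; exact hne12.symm
      have hsperm : Set.BijOn s U U :=
        perm_of_noncollapse hatom he hrange hmin hspoly hsU hxU hpxU hμxpx hsne
      refine ⟨s, ⟨hspoly, hsperm⟩, ?_⟩
      show e (q x) = t
      rw [← h2]; exact hlast
  -- orbit of x covers N
  have horb : ∀ t ∈ N, ∃ r ∈ PolPermFun Alg U, r x = t := by
    intro t htN
    obtain ⟨-, x₀, hx₀, y₀, hy₀, hxy₀⟩ := id hTN
    by_cases h : t = x₀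
    · exact hC y₀ t hy₀ htN (fun hc => hxy₀ ((hc.trans h).symm))
    · exact hC x₀ t hx₀ htN (fun hc => h hc.symm)
  -- transitivity on N
  have htransN : ∀ u ∈ N, ∀ t ∈ N, ∃ r ∈ PolPermFun Alg U, r u = t := by
    intro u huN t htN
    obtain ⟨r₁, hr₁, hr₁x⟩ := horb u huN
    obtain ⟨r₂, hr₂, hr₂x⟩ := horb t htN
    obtain ⟨q₁, hq₁, hq₁inv⟩ := exists_inverse hr₁
    refine ⟨fun z => r₂ (q₁ z), comp_mem_polperm hq₁ hr₂, ?_⟩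
    show r₂ (q₁ u) = t
    rw [← hr₁x, (hq₁inv x hxU).1, hr₂x]
  -- transitivity on the body
  rintro a ⟨Na, hTa, haNa⟩ b ⟨Nb, hTb, hbNb⟩
  obtain ⟨p₁, hp₁, him₁⟩ := trace_image hatom he hrange hmin hTa hTN
  obtain ⟨p₂, hp₂, him₂⟩ := trace_image hatom he hrange hmin hTN hTb
  have hp₁a : p₁ a ∈ N := him₁ ▸ ⟨a, haNa, rfl⟩
  obtain ⟨t, htN, hp₂t⟩ : ∃ t ∈ N, p₂ t = b := by
    rw [← him₂] at hbNb; obtain ⟨t, ht, hb⟩ := hbNb; exact ⟨t, ht, hb⟩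
  obtain ⟨r, hr, hrval⟩ := htransN (p₁ a) hp₁a t htN
  refine ⟨fun z => p₂ (r (p₁ z)), comp_mem_polperm (comp_mem_polperm hp₁ hr) hp₂, ?_⟩
  show p₂ (r (p₁ a)) = b
  rw [hrval, hp₂t]

theorem trace_two (hatom : IsAtomCong Alg μ)
    (he : IsIdempotentPoly Alg e) (hrange : U = Set.range e)
    (hmin : ∀ e', IsIdempotentPoly Alg e' → Set.range e' ⊆ U →
      (∃ a b, μ a b ∧ e' a ≠ e' b) → Set.range e' = U)
    (hnomove : ¬ ∃ p ∈ PolPermFun Alg U, ∃ N : Set A, IsTrace μ U N ∧ Set.MapsTo p N N ∧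
        ∃ x ∈ N, p x ≠ x)
    {N : Set A} (hT : IsTrace μ U N) {x y : A} (hxN : x ∈ N) (hyN : y ∈ N)
    (hxy : x ≠ y) : ∀ w ∈ N, w = x ∨ w = y := by
  have hE : Equivalence μ := hatom.1.1
  have hfix : ∀ g, g ∈ PolPermFun Alg U → Set.MapsTo g N N → ∀ z ∈ N, g z = z := by
    intro g hg hgN z hz
    by_contra hne
    exact hnomove ⟨g, hg, N, hT, hgN, z, hz, hne⟩
  have hxU := trace_sub hT hxN
  have hyU := trace_sub hT hyN
  have hμxy : μ x y := trace_rel hE hT _ hxN _ hyN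
  have hclaim : ∀ z, Relation.ReflTransGen (MLink Alg x y) x z → e z = x ∨ e z = y := by
    intro z hz
    induction hz with
    | refl => exact Or.inl (efix he hrange _ hxU)
    | @tail z₁ z₂ h' step ih =>
        by_cases hcase : e z₁ = e z₂
        · rw [← hcase]; exact ih
        · have hμxz₁ : μ x z₁ := mchain_sub_mu hatom.1 hμxy h'
          have hμxz₂ : μ x z₂ := mchain_sub_mu hatom.1 hμxy (h'.tail step)
          obtain ⟨q, hq, hor⟩ := step
          set g : A → A := fun w => e (q w) with hg
          have hgpoly : IsUnaryPolynomial Alg g := poly_comp hq he.1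
          have hgU : Set.MapsTo g U U := fun w _ => by rw [hrange]; exact ⟨q w, rfl⟩
          have hgU' : ∀ w, g w ∈ U := fun w => by rw [hrange]; exact ⟨q w, rfl⟩
          have hez₁N : e z₁ ∈ N := by
            refine trace_mem hE hT _ hxN _ (by rw [hrange]; exact ⟨z₁, rfl⟩) ?_
            have := congr_unary hatom.1 he.1 hμxz₁
            rw [efix he hrange _ hxU] at this
            exact hE.symm this
          have hez₂N : e z₂ ∈ N := by
            refine trace_mem hE hT _ hxN _ (by rw [hrange]; exact ⟨z₂, rfl⟩) ?_
            have := congr_unary hatom.1 he.1 hμxz₂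
            rw [efix he hrange _ hxU] at this
            exact hE.symm this
          have hgne : g x ≠ g y := by
            rcases hor with ⟨h1, h2⟩ | ⟨h1, h2⟩
            · show e (q x) ≠ e (q y); rw [← h1, ← h2]; exact hcase
            · show e (q x) ≠ e (q y); rw [← h1, ← h2]; exact (Ne.symm hcase)
          have hgperm : Set.BijOn g U U :=
            perm_of_noncollapse hatom he hrange hmin hgpoly hgU hxU hyU hμxy hgne
          have hgxN : g x ∈ N := by
            rcases hor with ⟨h1, -⟩ | ⟨-, h2⟩
            · show e (q x) ∈ N; rw [← h1]; exact hez₁N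
            · show e (q x) ∈ N; rw [← h2]; exact hez₂N
          have hgN : Set.MapsTo g N N := by
            intro w hw
            have : μ (g w) (g x) := congr_unary hatom.1 hgpoly (trace_rel hE hT _ hw _ hxN)
            exact trace_mem hE hT _ hgxN _ (hgU' w) this
          have hgx : g x = x := hfix g ⟨hgpoly, hgperm⟩ hgN x hxN
          have hgy : g y = y := hfix g ⟨hgpoly, hgperm⟩ hgN y hyN
          rcases hor with ⟨-, h2⟩ | ⟨-, h2⟩
          · right; show e z₂ = y; rw [h2]; exact hgy
          · left; show e z₂ = x; rw [h2]; exact hgx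
  intro w hwN
  have hμxw : μ x w := trace_rel hE hT _ hxN _ hwN
  have hchain : Relation.ReflTransGen (MLink Alg x y) x w :=
    malcev (cg_pair_eq_mu hatom hμxy hxy hμxw)
  have := hclaim w hchain
  rwa [efix he hrange _ (trace_sub hT hwN)] at this

end Aux4
/-- For an atom μ and a (⊥, μ)-minimal set U, the polynomial permutations of
U act transitively on traces; the action on the body has at most two orbits; and if some
polynomial permutation moves an element of a trace nontrivially within that trace, then
the action on the body is transitive. -/
theorem stmt_5 {σ : Signature} {A : Type} [Fintype A] (Alg : UAlg σ A)
    (μ : A → A → Prop) (hatom : IsAtomCong Alg μ)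
    (U : Set A) (hU : IsMinimalSet Alg μ U) :
    (∀ N₁ N₂ : Set A, IsTrace μ U N₁ → IsTrace μ U N₂ →
      ∃ p ∈ PolPermFun Alg U, p '' N₁ = N₂) ∧
    (∃ a ∈ Body μ U, ∃ b ∈ Body μ U, ∀ c ∈ Body μ U,
      (∃ p ∈ PolPermFun Alg U, p a = c) ∨ (∃ p ∈ PolPermFun Alg U, p b = c)) ∧
    ((∃ p ∈ PolPermFun Alg U, ∃ N : Set A, IsTrace μ U N ∧ Set.MapsTo p N N ∧
        ∃ x ∈ N, p x ≠ x) →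
      ∀ a ∈ Body μ U, ∀ b ∈ Body μ U, ∃ p ∈ PolPermFun Alg U, p a = b) := by
  obtain ⟨⟨e, he, hrange, a₀, b₀, hμ₀, hne₀⟩, hmin⟩ := hU
  have hE : Equivalence μ := hatom.1.1
  have part1 : ∀ N₁ N₂ : Set A, IsTrace μ U N₁ → IsTrace μ U N₂ →
      ∃ p ∈ PolPermFun Alg U, p '' N₁ = N₂ :=
    fun N₁ N₂ h1 h2 => trace_image hatom he hrange hmin h1 h2
  have heaU : e a₀ ∈ U := by rw [hrange]; exact ⟨a₀, rfl⟩
  have hebU : e b₀ ∈ U := by rw [hrange]; exact ⟨b₀, rfl⟩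
  have hμe : μ (e a₀) (e b₀) := congr_unary hatom.1 he.1 hμ₀
  set N₀ : Set A := {x ∈ U | μ x (e a₀)} with hN₀def
  have haN₀ : e a₀ ∈ N₀ := ⟨heaU, hE.refl _⟩
  have hbN₀ : e b₀ ∈ N₀ := ⟨hebU, hE.symm hμe⟩
  have hT₀ : IsTrace μ U N₀ := ⟨⟨e a₀, heaU, hN₀def⟩, e a₀, haN₀, e b₀, hbN₀, hne₀⟩
  refine ⟨part1, ?_, fun hm => trans_body hatom he hrange hmin hm⟩
  by_cases hmove : ∃ p ∈ PolPermFun Alg U, ∃ N : Set A, IsTrace μ U N ∧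
      Set.MapsTo p N N ∧ ∃ x ∈ N, p x ≠ x
  · refine ⟨e a₀, ⟨N₀, hT₀, haN₀⟩, e a₀, ⟨N₀, hT₀, haN₀⟩, fun c hc => Or.inl ?_⟩
    exact trans_body hatom he hrange hmin hmove _ ⟨N₀, hT₀, haN₀⟩ c hc
  · refine ⟨e a₀, ⟨N₀, hT₀, haN₀⟩, e b₀, ⟨N₀, hT₀, hbN₀⟩, ?_⟩
    rintro c ⟨N', hT', hcN'⟩
    obtain ⟨p, hp, him⟩ := part1 N₀ N' hT₀ hT'
    have hc' : c ∈ p '' N₀ := him ▸ hcN'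
    obtain ⟨z, hzN₀, hpz⟩ := hc'
    rcases trace_two hatom he hrange hmin hmove hT₀ haN₀ hbN₀ hne₀ z hzN₀ with rfl | rfl
    · left; exact ⟨p, hp, hpz⟩
    · right; exact ⟨p, hp, hpz⟩
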